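/- If α and β are signatures with α ≤ β, then there exists a surjective p-morphism from the starlike tree T⟨β⟩ onto the starlike tree T⟨α⟩. -/

import Mathlib

/-- The starlike tree `T⟨α⟩` of a signature `α`: a root `⊥` together with, for
each `j < |α|`, a chain of `α(j)` elements attached directly above the root. -/
def Starlike (α : List ℕ) : Type :=
  WithBot ((j : Fin α.length) × Fin (α.get j))

instance (α : List ℕ) : PartialOrder (Starlike α) :=
  inferInstanceAs (PartialOrder (WithBot ((j : Fin α.length) × Fin (α.get j))))


lemma min_lt_self_of_pos {a b : ℕ} (ha : 0 < a) : min b (a - 1) < a := by omega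

lemma sub_one_lt_self_of_pos {a : ℕ} (ha : 0 < a) : a - 1 < a := by omega

def starMap (α β : List ℕ) (hpos : 0 < α.length) (hαpos : ∀ k ∈ α, 0 < k)
    (p : (j : Fin β.length) × Fin (β.get j)) : (j : Fin α.length) × Fin (α.get j) :=
  if h : p.1.val < α.length then
    ⟨⟨p.1, h⟩, ⟨min p.2.val (α.get ⟨p.1, h⟩ - 1),
      min_lt_self_of_pos (hαpos _ (α.get_mem ⟨p.1.val, h⟩))⟩⟩
  else
    ⟨⟨0, hpos⟩, ⟨α.get ⟨0, hpos⟩ - 1,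
      sub_one_lt_self_of_pos (hαpos _ (α.get_mem ⟨0, hpos⟩))⟩⟩

lemma starMap_mk_pos (α β : List ℕ) (hpos : 0 < α.length) (hαpos : ∀ k ∈ α, 0 < k)
    (jv : ℕ) (hjβ : jv < β.length) (b : Fin (β.get ⟨jv, hjβ⟩)) (hc : jv < α.length) :
    starMap α β hpos hαpos ⟨⟨jv, hjβ⟩, b⟩ =
      ⟨⟨jv, hc⟩, ⟨min b.val (α.get ⟨jv, hc⟩ - 1),
        min_lt_self_of_pos (hαpos _ (α.get_mem ⟨jv, hc⟩))⟩⟩ :=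
  dif_pos hc

lemma starMap_mk_neg (α β : List ℕ) (hpos : 0 < α.length) (hαpos : ∀ k ∈ α, 0 < k)
    (jv : ℕ) (hjβ : jv < β.length) (b : Fin (β.get ⟨jv, hjβ⟩)) (hc : ¬ jv < α.length) :
    starMap α β hpos hαpos ⟨⟨jv, hjβ⟩, b⟩ =
      ⟨⟨0, hpos⟩, ⟨α.get ⟨0, hpos⟩ - 1,
        sub_one_lt_self_of_pos (hαpos _ (α.get_mem ⟨0, hpos⟩))⟩⟩ :=
  dif_neg hc

theorem stmt13_aux (α β : List ℕ)
    (hαpos : ∀ k ∈ α, 0 < k)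
    (hlen : α.length ≤ β.length)
    (hle : ∀ j : Fin α.length, α.get j ≤ β.get ⟨j, lt_of_lt_of_le j.2 hlen⟩) :
    ∃ f : WithBot ((j : Fin β.length) × Fin (β.get j)) →
          WithBot ((j : Fin α.length) × Fin (α.get j)),
      Function.Surjective f ∧ ∀ x, f '' Set.Ici x = Set.Ici (f x) := by
  rcases Nat.eq_zero_or_pos α.length with hz | hpos
  · -- degenerate case: α is empty
    have hbot : ∀ y : WithBot ((j : Fin α.length) × Fin (α.get j)), y = ⊥ := by
      intro y
      induction y using WithBot.recBotCoe with
      | bot => rfl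
      | coe p => exact absurd p.1.2 (by omega)
    refine ⟨fun _ => ⊥, fun y => ⟨⊥, (hbot y).symm⟩, fun x => ?_⟩
    ext y
    simp only [Set.mem_image, Set.mem_Ici]
    constructor
    · rintro ⟨z, _, rfl⟩
      exact bot_le
    · intro _
      exact ⟨x, le_refl x, (hbot y).symm⟩
  · set g := starMap α β hpos hαpos with hg
    have hsurj : Function.Surjective (WithBot.map g) := by
      intro y
      induction y using WithBot.recBotCoe with
      | bot => exact ⟨⊥, rfl⟩
      | coe q =>
        obtain ⟨⟨jv, hj⟩, ⟨tv, ht⟩⟩ := q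
        have haj : 0 < α.get ⟨jv, hj⟩ := hαpos _ (α.get_mem ⟨jv, hj⟩)
        refine ⟨↑(⟨⟨jv, lt_of_lt_of_le hj hlen⟩,
            ⟨tv, lt_of_lt_of_le ht (hle ⟨jv, hj⟩)⟩⟩ :
            (j : Fin β.length) × Fin (β.get j)), ?_⟩
        rw [WithBot.map_coe, hg, starMap_mk_pos α β hpos hαpos jv _ _ hj]
        have hm : min tv (α.get ⟨jv, hj⟩ - 1) = tv := by omega
        simp only [hm]
    refine ⟨WithBot.map g, hsurj, ?_⟩
    intro x
    induction x using WithBot.recBotCoe with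
    | bot =>
      rw [show (WithBot.map g ⊥ :
        WithBot ((j : Fin α.length) × Fin (α.get j))) = ⊥ from rfl]
      rw [Set.Ici_bot, Set.Ici_bot, Set.image_univ, hsurj.range_eq]
    | coe p =>
      obtain ⟨⟨jv, hj⟩, ⟨iv, hi⟩⟩ := p
      have haj0 : 0 < α.get ⟨0, hpos⟩ := hαpos _ (α.get_mem ⟨0, hpos⟩)
      ext y
      simp only [Set.mem_image, Set.mem_Ici]
      constructor
      · rintro ⟨z, hz, rfl⟩
        induction z using WithBot.recBotCoe with
        | bot => exact absurd hz (WithBot.not_coe_le_bot _)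
        | coe q =>
          rw [WithBot.coe_le_coe] at hz
          rcases hz with ⟨i, a, b, hab⟩
          rw [WithBot.map_coe, WithBot.map_coe, WithBot.coe_le_coe]
          have hab' : iv ≤ b.val := hab
          by_cases hc : jv < α.length
          · rw [hg, starMap_mk_pos α β hpos hαpos jv hj _ hc,
              starMap_mk_pos α β hpos hαpos jv hj _ hc]
            exact Sigma.LE.fiber _ _ _ (by
              show min iv _ ≤ min b.val _
              omega)
          · rw [hg, starMap_mk_neg α β hpos hαpos jv hj _ hc,
              starMap_mk_neg α β hpos hαpos jv hj _ hc]
      · intro hy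
        induction y using WithBot.recBotCoe with
        | bot =>
          rw [WithBot.map_coe] at hy
          exact absurd hy (WithBot.not_coe_le_bot _)
        | coe q =>
          rw [WithBot.map_coe, WithBot.coe_le_coe] at hy
          by_cases hc : jv < α.length
          · rw [hg, starMap_mk_pos α β hpos hαpos jv hj _ hc] at hy
            rcases hy with ⟨i, a, b, hab⟩
            have haj : 0 < α.get ⟨jv, hc⟩ := hαpos _ (α.get_mem ⟨jv, hc⟩)
            have hab' : min iv (α.get ⟨jv, hc⟩ - 1) ≤ b.val := hab
            have hbβ : b.val < β.get ⟨jv, hj⟩ := by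
              have h1 : α.get ⟨jv, hc⟩ ≤ β.get ⟨jv, hj⟩ := hle ⟨jv, hc⟩
              have h2 := b.2
              omega
            refine ⟨↑(⟨⟨jv, hj⟩, ⟨max iv b.val, by have := hi; omega⟩⟩ :
                (j : Fin β.length) × Fin (β.get j)), ?_, ?_⟩
            · rw [WithBot.coe_le_coe]
              exact Sigma.LE.fiber _ _ _ (by
                show iv ≤ max iv b.val
                omega)
            · rw [WithBot.map_coe, hg, starMap_mk_pos α β hpos hαpos jv hj _ hc]
              have hm : min (max iv b.val) (α.get ⟨jv, hc⟩ - 1) = b.val := by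
                have h2 := b.2
                omega
              simp only [hm, Fin.eta]
          · rw [hg, starMap_mk_neg α β hpos hαpos jv hj _ hc] at hy
            rcases hy with ⟨i, a, b, hab⟩
            have hab' : α.get ⟨0, hpos⟩ - 1 ≤ b.val := hab
            refine ⟨↑(⟨⟨jv, hj⟩, ⟨iv, hi⟩⟩ :
                (j : Fin β.length) × Fin (β.get j)), le_refl _, ?_⟩
            rw [WithBot.map_coe, hg, starMap_mk_neg α β hpos hαpos jv hj _ hc]
            have hm : α.get ⟨0, hpos⟩ - 1 = b.val := by
              have h2 := b.2
              omega
            simp only [hm, Fin.eta]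

/-- If `α ≤ β` as signatures, then there is a surjective p-morphism from the
starlike tree `T⟨β⟩` onto the starlike tree `T⟨α⟩`. -/
theorem stmt13 (α β : List ℕ)
    (hαs : α.Pairwise (· ≥ ·)) (hβs : β.Pairwise (· ≥ ·))
    (hαpos : ∀ k ∈ α, 0 < k) (hβpos : ∀ k ∈ β, 0 < k)
    (hlen : α.length ≤ β.length)
    (hle : ∀ j : Fin α.length, α.get j ≤ β.get ⟨j, lt_of_lt_of_le j.2 hlen⟩) :
    ∃ f : Starlike β → Starlike α,
      Function.Surjective f ∧ ∀ x, f '' Set.Ici x = Set.Ici (f x) := by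
  exact stmt13_aux α β hαpos hlen hle
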